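/- Gradient descent with step 1/L on an L-smooth function satisfying the μ-PL condition converges linearly: f(x^k) - f* ≤ (1 - μ/L)^k (f(x^0) - f*). -/

import Mathlib

open InnerProductSpace

lemma descent_lemma {n : ℕ} (f : EuclideanSpace ℝ (Fin n) → ℝ)
    (g : EuclideanSpace ℝ (Fin n) → EuclideanSpace ℝ (Fin n)) (L : ℝ) (hL : 0 < L)
    (hgrad : ∀ x, HasGradientAt f (g x) x)
    (hLip : ∀ x y, ‖g x - g y‖ ≤ L * ‖x - y‖)
    (x d : EuclideanSpace ℝ (Fin n)) :
    f (x + d) ≤ f x + inner ℝ (g x) d + L / 2 * ‖d‖ ^ 2 := by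
  set φ : ℝ → ℝ := fun t => f (x + t • d) - t * inner ℝ (g x) d - L / 2 * t ^ 2 * ‖d‖ ^ 2 with hφ
  have hderiv : ∀ t : ℝ, HasDerivAt φ
      ((inner ℝ (g (x + t • d) - g x) d : ℝ) - L * t * ‖d‖ ^ 2) t := by
    intro t
    have h1 : HasDerivAt (fun t : ℝ => x + t • d) d t := by
      simpa using ((hasDerivAt_id t).smul_const d).const_add x
    have h2 : HasDerivAt (fun t : ℝ => f (x + t • d))
        ((inner ℝ (g (x + t • d)) d : ℝ)) t := by
      have := ((hgrad (x + t • d)).hasFDerivAt).comp_hasDerivAt t h1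
      exact this
    have h3 : HasDerivAt (fun t : ℝ => t * (inner ℝ (g x) d : ℝ)) (inner ℝ (g x) d : ℝ) t := by
      simpa using (hasDerivAt_id t).mul_const (inner ℝ (g x) d : ℝ)
    have h4 : HasDerivAt (fun t : ℝ => L / 2 * t ^ 2 * ‖d‖ ^ 2) (L * t * ‖d‖ ^ 2) t := by
      have := ((hasDerivAt_pow 2 t).const_mul (L / 2)).mul_const (‖d‖ ^ 2)
      refine this.congr_deriv ?_
      ring
    have h5 := (h2.sub h3).sub h4
    refine h5.congr_deriv ?_
    rw [inner_sub_left]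
  have key : φ 1 ≤ φ 0 := by
    have hanti : AntitoneOn φ (Set.Icc (0:ℝ) 1) := by
      apply antitoneOn_of_deriv_nonpos (convex_Icc 0 1)
      · exact fun t _ => ((hderiv t).differentiableAt).continuousAt.continuousWithinAt
      · intro t ht
        exact ((hderiv t).differentiableAt).differentiableWithinAt
      · intro t ht
        rw [interior_Icc] at ht
        rw [(hderiv t).deriv]
        have h5 : (inner ℝ (g (x + t • d) - g x) d : ℝ) ≤ ‖g (x + t • d) - g x‖ * ‖d‖ :=
          real_inner_le_norm _ _
        have h6 : ‖g (x + t • d) - g x‖ ≤ L * (t * ‖d‖) := by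
          have := hLip (x + t • d) x
          simpa [norm_smul, abs_of_pos ht.1, mul_assoc] using this
        nlinarith [norm_nonneg d, norm_nonneg (g (x + t • d) - g x), ht.1.le]
    exact hanti (by norm_num) (by norm_num) (by norm_num)
  simp only [hφ, one_smul, one_mul, one_pow, zero_smul, zero_mul, add_zero, mul_zero,
    sub_zero, zero_pow, ne_eq, OfNat.ofNat_ne_zero, not_false_eq_true] at key
  linarith

/-- Gradient descent with step `1/L` on an `L`-smooth function satisfying the
`μ`-PL condition converges linearly:
`f(x^k) - f* ≤ (1 - μ/L)^k (f(x⁰) - f*)`. -/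
theorem gradient_descent_PL_linear_rate {n : ℕ} (f : EuclideanSpace ℝ (Fin n) → ℝ)
    (g : EuclideanSpace ℝ (Fin n) → EuclideanSpace ℝ (Fin n)) (L μ fstar : ℝ)
    (hL : 0 < L) (hμ : 0 < μ) (hμL : μ ≤ L)
    (hgrad : ∀ x, HasGradientAt f (g x) x)
    (hLip : ∀ x y, ‖g x - g y‖ ≤ L * ‖x - y‖)
    (xstar : EuclideanSpace ℝ (Fin n))
    (hmin : ∀ y, f xstar ≤ f y) (hfstar : f xstar = fstar)
    (hPL : ∀ x, f x - fstar ≤ 1 / (2 * μ) * ‖g x‖ ^ 2)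
    (x : ℕ → EuclideanSpace ℝ (Fin n))
    (hstep : ∀ k, x (k + 1) = x k - (1 / L) • g (x k)) :
    ∀ k, f (x k) - fstar ≤ (1 - μ / L) ^ k * (f (x 0) - fstar) := by
  have hstep' : ∀ k, f (x (k + 1)) - fstar ≤ (1 - μ / L) * (f (x k) - fstar) := by
    intro k
    have hd := descent_lemma f g L hL hgrad hLip (x k) (-(1 / L) • g (x k))
    rw [show x k + -(1 / L) • g (x k) = x (k + 1) by rw [hstep k, sub_eq_add_neg, neg_smul]] at hd
    have hin : (inner ℝ (g (x k)) (-(1 / L) • g (x k)) : ℝ) = -(1 / L) * ‖g (x k)‖ ^ 2 := by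
      rw [real_inner_smul_right, real_inner_self_eq_norm_sq]
    have hnorm : ‖-(1 / L) • g (x k)‖ ^ 2 = (1 / L) ^ 2 * ‖g (x k)‖ ^ 2 := by
      rw [norm_smul]
      rw [norm_neg]; rw [Real.norm_eq_abs, abs_of_pos (by positivity : (0:ℝ) < 1 / L)]; ring
    rw [hin, hnorm] at hd
    have hPLk : 2 * μ * (f (x k) - fstar) ≤ ‖g (x k)‖ ^ 2 := by
      have := hPL (x k)
      rw [div_mul_eq_mul_div, le_div_iff₀ (by positivity)] at this
      linarith
    have hL2 : (0:ℝ) < 2 * L := by linarith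
    have key : f (x (k + 1)) ≤ f (x k) - 1 / (2 * L) * ‖g (x k)‖ ^ 2 := by
      have he : -(1 / L) * ‖g (x k)‖ ^ 2 + L / 2 * ((1 / L) ^ 2 * ‖g (x k)‖ ^ 2)
          = -(1 / (2 * L)) * ‖g (x k)‖ ^ 2 := by field_simp; ring
      nlinarith [hd]
    have h1 : 1 / (2 * L) * (2 * μ * (f (x k) - fstar)) ≤ 1 / (2 * L) * ‖g (x k)‖ ^ 2 := by
      apply mul_le_mul_of_nonneg_left hPLk (by positivity)
    have : 1 / (2 * L) * (2 * μ * (f (x k) - fstar)) = μ / L * (f (x k) - fstar) := by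
      field_simp
    linarith
  intro k
  induction k with
  | zero => simp
  | succ k ih =>
    calc f (x (k + 1)) - fstar ≤ (1 - μ / L) * (f (x k) - fstar) := hstep' k
      _ ≤ (1 - μ / L) * ((1 - μ / L) ^ k * (f (x 0) - fstar)) := by
          apply mul_le_mul_of_nonneg_left ih
          have : μ / L ≤ 1 := (div_le_one hL).mpr hμL
          linarith
      _ = (1 - μ / L) ^ (k + 1) * (f (x 0) - fstar) := by ring
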